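/- With odds ratios min{S/Q, 1} and min{s/q, 1} for the two groups (Q, q ∈ (0,1]), and budget constraint (1-β)S + βs = σ, equalized odds min{S/Q,1} = min{s/q,1} holds if and only if either (S = Qρ ≤ Q and s = qρ ≤ q) or (S ≥ Q and s ≥ q), where ρ = σ/((1-β)Q + βq). -/

import Mathlib

/-- Equalized odds min{S/Q,1} = min{s/q,1} holds iff
(S = Qρ ≤ Q and s = qρ ≤ q) or (S ≥ Q and s ≥ q), where ρ = σ/((1-β)Q + βq). -/
theorem equalized_odds_iff (β σ Q q S s ρ : ℝ)
    (hβ : 0 < β) (hβ1 : β < 1) (hσ : 0 < σ) (hσ1 : σ < 1)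
    (hQ : 0 < Q) (hQ1 : Q ≤ 1) (hq : 0 < q) (hq1 : q ≤ 1)
    (hS : 0 ≤ S) (hS1 : S ≤ 1) (hs : 0 ≤ s) (hs1 : s ≤ 1)
    (hbudget : (1 - β) * S + β * s = σ)
    (hρ : ρ = σ / ((1 - β) * Q + β * q)) :
    min (S / Q) 1 = min (s / q) 1 ↔
      ((S = Q * ρ ∧ S ≤ Q ∧ s = q * ρ ∧ s ≤ q) ∨ (Q ≤ S ∧ q ≤ s)) := by
  have hD : 0 < (1 - β) * Q + β * q := by nlinarith
  constructor
  · intro h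
    rcases le_or_gt Q S with hQS | hQS
    · rcases le_or_gt q s with hqs | hqs
      · exact Or.inr ⟨hQS, hqs⟩
      · exfalso
        have h1 : min (S / Q) 1 = 1 := min_eq_right (by rw [le_div_iff₀ hQ]; linarith)
        have h2 : min (s / q) 1 = s / q :=
          min_eq_left (le_of_lt (by rw [div_lt_one hq]; linarith))
        rw [h1, h2] at h
        have h3 : s / q < 1 := by rw [div_lt_one hq]; linarith
        linarith
    · rcases le_or_gt q s with hqs | hqs
      · exfalso
        have h1 : min (S / Q) 1 = S / Q :=
          min_eq_left (le_of_lt (by rw [div_lt_one hQ]; linarith))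
        have h2 : min (s / q) 1 = 1 := min_eq_right (by rw [le_div_iff₀ hq]; linarith)
        rw [h1, h2] at h
        have h3 : S / Q < 1 := by rw [div_lt_one hQ]; linarith
        linarith
      · have h1 : min (S / Q) 1 = S / Q :=
          min_eq_left (le_of_lt (by rw [div_lt_one hQ]; linarith))
        have h2 : min (s / q) 1 = s / q :=
          min_eq_left (le_of_lt (by rw [div_lt_one hq]; linarith))
        rw [h1, h2] at h
        have hcross : S * q = s * Q := by
          field_simp at h; linarith
        have hSval : S = Q * ρ := by
          rw [hρ, ← hbudget]
          rw [← mul_div_assoc, eq_div_iff hD.ne']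
          nlinarith [hcross]
        have hsval : s = q * ρ := by
          rw [hρ, ← hbudget]
          rw [← mul_div_assoc, eq_div_iff hD.ne']
          nlinarith [hcross]
        exact Or.inl ⟨hSval, le_of_lt hQS, hsval, le_of_lt hqs⟩
  · rintro (⟨h1, h2, h3, h4⟩ | ⟨h1, h2⟩)
    · have hr : S / Q = s / q := by
        rw [h1, h3]; field_simp
      rw [hr]
    · rw [min_eq_right (by rw [le_div_iff₀ hQ]; linarith),
        min_eq_right (by rw [le_div_iff₀ hq]; linarith)]
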